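/- For fixed x ≥ 0, the function g ↦ (1/2)·log₂(1 + x) − k_g(x) is nonincreasing on (0, ∞): if 0 < g₁ ≤ g₂ then k_{g₁}(x) ≤ k_{g₂}(x), hence (1/2)·log₂(1 + x) − k_{g₂}(x) ≤ (1/2)·log₂(1 + x) − k_{g₁}(x). In particular, over g ≥ 1 this gap is maximized at g = 1. -/

import Mathlib

set_option maxHeartbeats 1000000


open Real

lemma div2L (x L t : ℝ) : x / (2*L*t) = (x/t)/(2*L) := by ring

lemma half_div (a L : ℝ) : a/(2*L) = 1/2*(a/L) := by ring

lemma one_sub_inv_le_log {z : ℝ} (hz : 0 < z) : 1 - 1/z ≤ Real.log z := by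
  have h := Real.log_le_sub_one_of_pos (show (0:ℝ) < 1/z by positivity)
  rw [one_div, Real.log_inv] at h
  rw [one_div]
  linarith

/-- Monotonicity of the user-2 gap in the channel gain: for fixed `x ≥ 0`, if
`0 < g₁ ≤ g₂` with corresponding envelope functions `k_{g₁}`, `k_{g₂}`, then
`k_{g₁} x ≤ k_{g₂} x`, hence
`(1/2) log₂ (1+x) − k_{g₂} x ≤ (1/2) log₂ (1+x) − k_{g₁} x`; in particular over
`g ≥ 1` the gap is maximized at `g = 1`. -/
theorem stmt_11 (g1 g2 : ℝ) (hg1 : 0 < g1) (hg12 : g1 ≤ g2)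
    (c1 c2 : ℝ) (hc1 : c1 = 1 / (g1 + 1)) (hc2 : c2 = 1 / (g2 + 1))
    (ys1 : ℝ) (hys1 : 0 < ys1) (heq1 : Real.log (g1 * (ys1 + c1)) = ys1 / (ys1 + c1))
    (ys2 : ℝ) (hys2 : 0 < ys2) (heq2 : Real.log (g2 * (ys2 + c2)) = ys2 / (ys2 + c2))
    (k1 k2 : ℝ → ℝ)
    (k1lin : ∀ x : ℝ, 0 ≤ x → x ≤ ys1 → k1 x = x / (2 * Real.log 2 * (ys1 + c1)))
    (k1log : ∀ x : ℝ, ys1 ≤ x → k1 x = (1 / 2) * Real.logb 2 (g1 * x + g1 / (g1 + 1)))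
    (k2lin : ∀ x : ℝ, 0 ≤ x → x ≤ ys2 → k2 x = x / (2 * Real.log 2 * (ys2 + c2)))
    (k2log : ∀ x : ℝ, ys2 ≤ x → k2 x = (1 / 2) * Real.logb 2 (g2 * x + g2 / (g2 + 1))) :
    ∀ x : ℝ, 0 ≤ x →
      k1 x ≤ k2 x ∧
      (1 / 2) * Real.logb 2 (1 + x) - k2 x ≤ (1 / 2) * Real.logb 2 (1 + x) - k1 x := by
  have hg2 : 0 < g2 := lt_of_lt_of_le hg1 hg12
  have hc1p : 0 < c1 := by rw [hc1]; positivity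
  have hc2p : 0 < c2 := by rw [hc2]; positivity
  have hc21 : c2 ≤ c1 := by
    rw [hc1, hc2]
    gcongr <;> linarith
  have ht1 : 0 < ys1 + c1 := by linarith
  have ht2 : 0 < ys2 + c2 := by linarith
  have hL : 0 < Real.log 2 := Real.log_pos (by norm_num)
  -- expand the defining equations
  have hlogt1 : Real.log g1 + Real.log (ys1 + c1) = ys1 / (ys1 + c1) := by
    rw [← Real.log_mul (ne_of_gt hg1) (ne_of_gt ht1)]; exact heq1
  have hlogt2 : Real.log g2 + Real.log (ys2 + c2) = ys2 / (ys2 + c2) := by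
    rw [← Real.log_mul (ne_of_gt hg2) (ne_of_gt ht2)]; exact heq2
  -- g1 * t1 > 1
  have h1t1 : 1 < g1 * (ys1 + c1) := by
    have hpos : 0 < Real.log (g1 * (ys1 + c1)) := by rw [heq1]; positivity
    exact (Real.log_pos_iff (by positivity)).mp hpos
  -- t2 ≤ t1
  have htle : ys2 + c2 ≤ ys1 + c1 := by
    by_contra hcon
    push_neg at hcon
    have hA : 1 - g1/g2 ≤ Real.log g2 - Real.log g1 := by
      have h := one_sub_inv_le_log (show (0:ℝ) < g2/g1 by positivity)
      rw [Real.log_div (ne_of_gt hg2) (ne_of_gt hg1), one_div_div] at h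
      exact h
    have hB : 1 - (ys1 + c1)/(ys2 + c2) ≤ Real.log (ys2 + c2) - Real.log (ys1 + c1) := by
      have h := one_sub_inv_le_log (show (0:ℝ) < (ys2+c2)/(ys1+c1) by positivity)
      rw [Real.log_div (ne_of_gt ht2) (ne_of_gt ht1), one_div_div] at h
      exact h
    have hE1 : ys1 / (ys1 + c1) = 1 - c1/(ys1 + c1) := by field_simp; ring
    have hE2 : ys2 / (ys2 + c2) = 1 - c2/(ys2 + c2) := by field_simp; ring
    have hstar : 2 - g1/g2 - (ys1+c1)/(ys2+c2) ≤ c1/(ys1+c1) - c2/(ys2+c2) := by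
      linarith [hA, hB, hlogt1, hlogt2, hE1, hE2]
    -- now get the reverse strict inequality
    have hsub1 : (c1 - c2)/(ys1 + c1) ≤ (g2 - g1)/g2 := by
      have hcd : c1 - c2 = (g2 - g1)/((g1+1)*(g2+1)) := by
        rw [hc1, hc2]; field_simp; ring
      have h1 : (c1 - c2)/(ys1 + c1) ≤ (c1 - c2) * g1 := by
        rw [div_le_iff₀ ht1]
        have hcc : 0 ≤ c1 - c2 := by linarith
        nlinarith
      have h2 : (c1 - c2) * g1 ≤ (g2 - g1)/g2 := by
        rw [hcd, div_mul_eq_mul_div, div_le_div_iff₀ (by positivity) hg2]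
        nlinarith [mul_nonneg (sub_nonneg.mpr hg12) (mul_pos hg1 hg2).le]
      linarith
    have hct : c2 < ys1 + c1 := by linarith
    have hsub2 : c2 * ((ys2+c2) - (ys1+c1)) / ((ys1+c1)*(ys2+c2)) <
        ((ys2+c2) - (ys1+c1))/(ys2+c2) := by
      rw [div_lt_div_iff₀ (by positivity) ht2]
      nlinarith [mul_pos (mul_pos (sub_pos.mpr hcon) ht2) (sub_pos.mpr hct)]
    have hid : c1/(ys1+c1) - c2/(ys2+c2) =
        (c1 - c2)/(ys1+c1) + c2 * ((ys2+c2) - (ys1+c1)) / ((ys1+c1)*(ys2+c2)) := by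
      field_simp; ring
    have hrw1 : (g2 - g1)/g2 = 1 - g1/g2 := by field_simp
    have hrw2 : ((ys2+c2) - (ys1+c1))/(ys2+c2) = 1 - (ys1+c1)/(ys2+c2) := by field_simp
    linarith
  -- tangent bound for k1's log part: log(g1*(x+c1)) ≤ x/t1 for x ≥ 0
  have tangent1 : ∀ x : ℝ, 0 ≤ x → Real.log (g1 * (x + c1)) ≤ x / (ys1 + c1) := by
    intro x hx
    have hxc : 0 < x + c1 := by linarith
    have h := Real.log_le_sub_one_of_pos (show (0:ℝ) < (x+c1)/(ys1+c1) by positivity)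
    rw [Real.log_div (ne_of_gt hxc) (ne_of_gt ht1)] at h
    have hlg : Real.log (g1 * (x + c1)) = Real.log g1 + Real.log (x + c1) :=
      Real.log_mul (ne_of_gt hg1) (ne_of_gt hxc)
    have hkey : ys1/(ys1+c1) + ((x+c1)/(ys1+c1) - 1) = x/(ys1+c1) := by
      field_simp; ring
    linarith [hlogt1]
  -- chord/key bound: for ys2 ≤ x ≤ ys1, log(g2*(x+c2)) ≥ x/t1
  have key2 : ∀ x : ℝ, ys2 ≤ x → x ≤ ys1 → x / (ys1 + c1) ≤ Real.log (g2 * (x + c2)) := by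
    intro x h2 h1
    have hxc : 0 < x + c2 := by linarith
    have h := one_sub_inv_le_log (show (0:ℝ) < (x+c2)/(ys2+c2) by positivity)
    rw [Real.log_div (ne_of_gt hxc) (ne_of_gt ht2), one_div_div] at h
    have he : 1 - (ys2+c2)/(x+c2) = (x - ys2)/(x+c2) := by
      rw [eq_div_iff (ne_of_gt hxc), sub_mul, div_mul_cancel₀ _ (ne_of_gt hxc)]; ring
    have hmono : (x - ys2)/(ys1+c1) ≤ (x - ys2)/(x+c2) :=
      div_le_div_of_nonneg_left (by linarith) hxc (by linarith)
    have hmono2 : ys2/(ys1+c1) ≤ ys2/(ys2+c2) :=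
      div_le_div_of_nonneg_left hys2.le ht2 htle
    have hlg : Real.log (g2 * (x + c2)) = Real.log g2 + Real.log (x + c2) :=
      Real.log_mul (ne_of_gt hg2) (ne_of_gt hxc)
    have hsum : ys2/(ys1+c1) + (x - ys2)/(ys1+c1) = x/(ys1+c1) := by ring
    linarith [hlogt2]
  -- log part is monotone in g
  have logmono : ∀ x : ℝ, 0 ≤ x →
      Real.log (g1 * (x + c1)) ≤ Real.log (g2 * (x + c2)) := by
    intro x hx
    apply Real.log_le_log (by positivity)
    have hcc : g1 * c1 ≤ g2 * c2 := by
      rw [hc1, hc2]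
      rw [mul_one_div, mul_one_div, div_le_div_iff₀ (by linarith) (by linarith)]
      nlinarith
    nlinarith
  -- rewrite log pieces
  have karg1 : ∀ x : ℝ, g1 * x + g1 / (g1 + 1) = g1 * (x + c1) := by
    intro x; rw [hc1]; ring
  have karg2 : ∀ x : ℝ, g2 * x + g2 / (g2 + 1) = g2 * (x + c2) := by
    intro x; rw [hc2]; ring
  intro x hx
  have main : k1 x ≤ k2 x := by
    rcases le_or_gt x ys1 with h1 | h1 <;> rcases le_or_gt x ys2 with h2 | h2
    · -- both linear
      rw [k1lin x hx h1, k2lin x hx h2]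
      exact div_le_div_of_nonneg_left hx (by positivity) (by nlinarith)
    · -- k1 linear, k2 log
      rw [k1lin x hx h1, k2log x h2.le, karg2]
      simp only [Real.logb]
      have hk := key2 x h2.le h1
      calc x / (2 * Real.log 2 * (ys1 + c1)) = (x/(ys1+c1)) / (2 * Real.log 2) :=
            div2L x (Real.log 2) (ys1+c1)
        _ ≤ Real.log (g2*(x+c2)) / (2 * Real.log 2) :=
            (div_le_div_iff_of_pos_right (by positivity)).mpr hk
        _ = 1/2 * (Real.log (g2*(x+c2)) / Real.log 2) := half_div _ _
    · -- k1 log, k2 linear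
      rw [k1log x h1.le, k2lin x hx h2, karg1]
      simp only [Real.logb]
      have ht := tangent1 x hx
      have hxx : x/(ys1+c1) ≤ x/(ys2+c2) := div_le_div_of_nonneg_left hx ht2 htle
      calc 1/2 * (Real.log (g1*(x+c1)) / Real.log 2)
          = Real.log (g1*(x+c1)) / (2 * Real.log 2) := (half_div _ _).symm
        _ ≤ (x/(ys1+c1)) / (2 * Real.log 2) := (div_le_div_iff_of_pos_right (by positivity)).mpr ht
        _ ≤ (x/(ys2+c2)) / (2 * Real.log 2) := (div_le_div_iff_of_pos_right (by positivity)).mpr hxx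
        _ = x / (2 * Real.log 2 * (ys2+c2)) := (div2L x (Real.log 2) (ys2+c2)).symm
    · -- both log
      rw [k1log x h1.le, k2log x h2.le, karg1, karg2]
      simp only [Real.logb]
      have hm := logmono x hx
      have h' := (div_le_div_iff_of_pos_right hL).mpr hm
      linarith
  exact ⟨main, by linarith⟩
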